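/- Let c > 0 be a real number and n ≥ 1 an integer. For k = 1, …, 2n set v_k = (c·(k² − 1)/(k² + 1), c·2k/(k² + 1)) ∈ ℝ². Define 4n points r_0, r_1, …, r_{4n−1} by r_0 = (0,0), r_j = r_{j−1} + v_j for 1 ≤ j ≤ 2n, and r_j = r_{j−1} − v_{j−2n} for 2n+1 ≤ j ≤ 4n−1. Then: (i) the family (r_j)_{0 ≤ j ≤ 4n−1} is convex independent (the points are in convex position), and (ii) the cyclic consecutive distances are all equal to c, that is, dist(r_{j−1}, r_j) = c for 1 ≤ j ≤ 4n−1 and dist(r_{4n−1}, r_0) = c; consequently the perimeter of the resulting convex polygon is 4n·c. -/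

import Mathlib

/-- A point of the Euclidean plane given by its two coordinates. -/
noncomputable def e2 (a b : ℝ) : EuclideanSpace ℝ (Fin 2) := WithLp.toLp 2 ![a, b]

@[simp] lemma e2_apply_zero (a b : ℝ) : e2 a b 0 = a := rfl
@[simp] lemma e2_apply_one (a b : ℝ) : e2 a b 1 = b := rfl

/-- Generic "zonotope vertex" sum comparison lemma. -/
lemma aux_sum_lt {f : ℕ → ℝ} {A B U : Finset ℕ} (hA : A ⊆ U) (hAB : A ≠ B)
    (hpos : ∀ k ∈ B, 0 < f k) (hneg : ∀ k ∈ U, k ∉ B → f k < 0) :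
    ∑ k ∈ A, f k < ∑ k ∈ B, f k := by
  by_cases hd : (A \ B).Nonempty
  · have h1 : ∑ k ∈ A \ B, f k < 0 :=
      Finset.sum_neg (fun k hk => hneg k (hA (Finset.mem_sdiff.1 hk).1)
        (Finset.mem_sdiff.1 hk).2) hd
    have h2 : ∑ k ∈ A ∩ B, f k ≤ ∑ k ∈ B, f k :=
      Finset.sum_le_sum_of_subset_of_nonneg Finset.inter_subset_right
        (fun k hk _ => (hpos k hk).le)
    have h3 : ∑ k ∈ A ∩ B, f k + ∑ k ∈ A \ B, f k = ∑ k ∈ A, f k :=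
      Finset.sum_inter_add_sum_sdiff A B f
    linarith
  · rw [Finset.not_nonempty_iff_eq_empty, Finset.sdiff_eq_empty_iff_subset] at hd
    obtain ⟨i, hiB, hiA⟩ : ∃ i ∈ B, i ∉ A := by
      by_contra h
      push_neg at h
      exact hAB (Finset.Subset.antisymm hd h)
    exact Finset.sum_lt_sum_of_subset hd hiB hiA (hpos i hiB) (fun j hj _ => (hpos j hj).le)

/-- Norm of the edge vectors. -/
lemma aux_vnorm (c : ℝ) (hc : 0 < c) (k : ℕ) :
    ‖e2 (c * ((k : ℝ) ^ 2 - 1) / ((k : ℝ) ^ 2 + 1))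
       (c * (2 * (k : ℝ)) / ((k : ℝ) ^ 2 + 1))‖ = c := by
  have hk : ((k : ℝ) ^ 2 + 1) ≠ 0 := by positivity
  rw [EuclideanSpace.norm_eq]
  rw [show (c : ℝ) = Real.sqrt (c ^ 2) from (Real.sqrt_sq hc.le).symm]
  congr 1
  rw [Fin.sum_univ_two]
  simp only [e2_apply_zero, e2_apply_one, Real.norm_eq_abs, sq_abs]
  field_simp
  simp only [Real.sqrt_sq hc.le]
  ring

/-- Inner product of `e2 (-2t) (t²-1)` with the edge vector: key algebraic identity. -/
lemma aux_inner (c : ℝ) (t : ℝ) (k : ℕ) :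
    (inner ℝ (e2 (-2*t) (t^2-1))
      (e2 (c * ((k : ℝ) ^ 2 - 1) / ((k : ℝ) ^ 2 + 1))
          (c * (2 * (k : ℝ)) / ((k : ℝ) ^ 2 + 1))) : ℝ)
      = 2*c*(t - k)*(t*k + 1) / ((k : ℝ)^2 + 1) := by
  have hk : ((k : ℝ) ^ 2 + 1) ≠ 0 := by positivity
  rw [PiLp.inner_apply, Fin.sum_univ_two]
  simp only [e2_apply_zero, e2_apply_one, RCLike.inner_apply, conj_trivial]
  field_simp
  ring

/-- Negated version for the "descending" chain. -/
lemma aux_inner_neg (c : ℝ) (t : ℝ) (k : ℕ) :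
    (inner ℝ (e2 (2*t) (1-t^2))
      (e2 (c * ((k : ℝ) ^ 2 - 1) / ((k : ℝ) ^ 2 + 1))
          (c * (2 * (k : ℝ)) / ((k : ℝ) ^ 2 + 1))) : ℝ)
      = 2*c*((k : ℝ) - t)*(t*k + 1) / ((k : ℝ)^2 + 1) := by
  have hk : ((k : ℝ) ^ 2 + 1) ≠ 0 := by positivity
  rw [PiLp.inner_apply, Fin.sum_univ_two]
  simp only [e2_apply_zero, e2_apply_one, RCLike.inner_apply, conj_trivial]
  field_simp
  ring

/-- The index set of edge vectors summed to reach vertex `j` of the polygon. -/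
def polyS (n j : ℕ) : Finset ℕ :=
  if j ≤ 2 * n then Finset.Icc 1 j else Finset.Icc (j - 2 * n + 1) (2 * n)

lemma polyS_subset (n j : ℕ) : polyS n j ⊆ Finset.Icc 1 (2 * n) := by
  intro k hk
  unfold polyS at hk
  split_ifs at hk with h <;> rw [Finset.mem_Icc] at hk ⊢ <;> omega

lemma polyS_card (n j : ℕ) (_hj : j ≤ 4 * n - 1) (_hn : 1 ≤ n) :
    (polyS n j).card = if j ≤ 2 * n then j else 4 * n - j := by
  unfold polyS
  split_ifs with h <;> rw [Nat.card_Icc] <;> omega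

lemma polyS_one_mem (n j : ℕ) : 1 ∈ polyS n j ↔ 1 ≤ j ∧ j ≤ 2 * n := by
  unfold polyS
  split_ifs with h <;> rw [Finset.mem_Icc] <;> omega

lemma polyS_injOn (n : ℕ) (hn : 1 ≤ n) {i j : ℕ} (hi : i ≤ 4 * n - 1) (hj : j ≤ 4 * n - 1)
    (h : polyS n i = polyS n j) : i = j := by
  have hcard : (polyS n i).card = (polyS n j).card := by rw [h]
  rw [polyS_card n i hi hn, polyS_card n j hj hn] at hcard
  have hone : (1 ∈ polyS n i) ↔ (1 ∈ polyS n j) := by rw [h]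
  rw [polyS_one_mem, polyS_one_mem] at hone
  by_cases h1 : i ≤ 2 * n <;> by_cases h2 : j ≤ 2 * n <;>
    simp [h1, h2] at hcard hone <;> omega


/-- The polygon construction of the perimeter hardness reduction: starting from the
origin and following the vectors `v_1, …, v_{2n}` and then `-v_1, …, -v_{2n-1}`
produces `4n` points in convex position whose cyclic consecutive distances are all
equal to `c`, so the perimeter of the resulting convex polygon is `4 n c`. -/
theorem perimeter_polygon_construction
    (c : ℝ) (hc : 0 < c) (n : ℕ) (hn : 1 ≤ n)
    (v : ℕ → EuclideanSpace ℝ (Fin 2))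
    (hv : ∀ k : ℕ, v k =
      !₂[c * ((k : ℝ) ^ 2 - 1) / ((k : ℝ) ^ 2 + 1),
        c * (2 * (k : ℝ)) / ((k : ℝ) ^ 2 + 1)])
    (r : ℕ → EuclideanSpace ℝ (Fin 2))
    (hr0 : r 0 = 0)
    (hrup : ∀ j : ℕ, 1 ≤ j → j ≤ 2 * n → r j = r (j - 1) + v j)
    (hrdown : ∀ j : ℕ, 2 * n + 1 ≤ j → j ≤ 4 * n - 1 → r j = r (j - 1) - v (j - 2 * n)) :
    ConvexIndependent ℝ (fun j : Fin (4 * n) => r j) ∧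
      (∀ j : ℕ, 1 ≤ j → j ≤ 4 * n - 1 → dist (r (j - 1)) (r j) = c) ∧
      dist (r (4 * n - 1)) (r 0) = c ∧
      ∑ j ∈ Finset.range (4 * n), dist (r j) (r ((j + 1) % (4 * n))) = 4 * n * c := by
  have hv' : ∀ k : ℕ, v k = e2 (c * ((k : ℝ) ^ 2 - 1) / ((k : ℝ) ^ 2 + 1))
      (c * (2 * (k : ℝ)) / ((k : ℝ) ^ 2 + 1)) := hv
  have hvnorm : ∀ k : ℕ, ‖v k‖ = c := fun k => by rw [hv' k]; exact aux_vnorm c hc k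
  -- closed form for the vertices
  have hform : ∀ j : ℕ, j ≤ 4 * n - 1 → r j = ∑ k ∈ polyS n j, v k := by
    intro j
    induction j with
    | zero =>
      intro _
      simp [polyS, hr0, show (0:ℕ) ≤ 2 * n by omega]
    | succ j ih =>
      intro hj
      have hrj := ih (by omega)
      by_cases h2 : j + 1 ≤ 2 * n
      · rw [hrup (j + 1) (by omega) h2]
        simp only [Nat.add_sub_cancel]
        rw [hrj]
        have hins : polyS n (j + 1) = insert (j + 1) (polyS n j) := by
          ext k
          simp only [polyS, if_pos h2, if_pos (show j ≤ 2 * n by omega), Finset.mem_Icc,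
            Finset.mem_insert]
          omega
        have hnot : (j + 1) ∉ polyS n j := by
          simp only [polyS, if_pos (show j ≤ 2 * n by omega), Finset.mem_Icc]
          omega
        rw [hins, Finset.sum_insert hnot]
        abel
      · rw [hrdown (j + 1) (by omega) hj]
        simp only [Nat.add_sub_cancel]
        rw [hrj]
        have hins : polyS n j = insert (j + 1 - 2 * n) (polyS n (j + 1)) := by
          ext k
          by_cases hj2 : j ≤ 2 * n
          · simp only [polyS, if_pos hj2, if_neg h2, Finset.mem_Icc, Finset.mem_insert]
            omega
          · simp only [polyS, if_neg hj2, if_neg h2, Finset.mem_Icc, Finset.mem_insert]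
            omega
        have hnot : (j + 1 - 2 * n) ∉ polyS n (j + 1) := by
          simp only [polyS, if_neg h2, Finset.mem_Icc]
          omega
        rw [hins, Finset.sum_insert hnot]
        abel
  -- the cyclic distances
  have hdist : ∀ j : ℕ, 1 ≤ j → j ≤ 4 * n - 1 → dist (r (j - 1)) (r j) = c := by
    intro j h1 h2
    by_cases hup : j ≤ 2 * n
    · rw [hrup j h1 hup, dist_self_add_right, hvnorm]
    · rw [hrdown j (by omega) h2, dist_self_sub_right, hvnorm]
  have hlast : dist (r (4 * n - 1)) (r 0) = c := by
    have h := hform (4 * n - 1) le_rfl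
    have hS : polyS n (4 * n - 1) = {2 * n} := by
      ext k
      simp only [polyS, if_neg (show ¬ 4 * n - 1 ≤ 2 * n by omega), Finset.mem_Icc,
        Finset.mem_singleton]
      omega
    rw [h, hS, Finset.sum_singleton, hr0, dist_zero_right, hvnorm]
  refine ⟨?_, hdist, hlast, ?_⟩
  · -- convex independence
    intro s x hx
    by_contra hxs
    -- separating functional for vertex x
    have hxle : (x : ℕ) ≤ 4 * n - 1 := by have := x.isLt; omega
    obtain ⟨w, hpos, hneg⟩ : ∃ w : EuclideanSpace ℝ (Fin 2),
        (∀ k ∈ polyS n x, (0:ℝ) < inner ℝ w (v k)) ∧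
        (∀ k ∈ Finset.Icc 1 (2 * n), k ∉ polyS n (x : ℕ) → (inner ℝ w (v k) : ℝ) < 0) := by
      by_cases hx2 : (x : ℕ) ≤ 2 * n
      · set t : ℝ := (x : ℝ) + 1/2 with ht
        refine ⟨e2 (-2*t) (t^2-1), ?_, ?_⟩
        · intro k hk
          rw [polyS, if_pos hx2, Finset.mem_Icc] at hk
          rw [hv' k, aux_inner]
          have hkx : (k : ℝ) ≤ (x : ℝ) := Nat.cast_le.2 hk.2
          have hk0 : (0 : ℝ) ≤ k := Nat.cast_nonneg k
          have h1 : 0 < t - k := by rw [ht]; linarith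
          have h2 : 0 < t * k + 1 := by
            have : (0:ℝ) ≤ t * k := mul_nonneg (by positivity) hk0
            linarith
          have h3 : (0:ℝ) < (k:ℝ)^2 + 1 := by positivity
          exact div_pos (mul_pos (mul_pos (by linarith) h1) h2) h3
        · intro k hk hk'
          rw [Finset.mem_Icc] at hk
          rw [polyS, if_pos hx2, Finset.mem_Icc] at hk'
          have hkx : (x : ℕ) + 1 ≤ k := by omega
          have hkx' : (x : ℝ) + 1 ≤ (k : ℝ) := by exact_mod_cast Nat.cast_le.2 hkx
          have hk0 : (0 : ℝ) ≤ k := Nat.cast_nonneg k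
          rw [hv' k, aux_inner]
          have h1 : t - k < 0 := by rw [ht]; linarith
          have h2 : 0 < t * k + 1 := by
            have : (0:ℝ) ≤ t * k := mul_nonneg (by positivity) hk0
            linarith
          have h3 : (0:ℝ) < (k:ℝ)^2 + 1 := by positivity
          exact div_neg_of_neg_of_pos
            (mul_neg_of_neg_of_pos (mul_neg_of_pos_of_neg (by linarith) h1) h2) h3
      · set m : ℕ := (x : ℕ) - 2 * n with hm
        set t : ℝ := (m : ℝ) + 1/2 with ht
        have ht0 : (0:ℝ) < t := by positivity
        refine ⟨e2 (2*t) (1-t^2), ?_, ?_⟩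
        · intro k hk
          rw [polyS, if_neg hx2, Finset.mem_Icc] at hk
          rw [hv' k, aux_inner_neg]
          have hkm : m + 1 ≤ k := by omega
          have hkm' : (m : ℝ) + 1 ≤ (k : ℝ) := by exact_mod_cast Nat.cast_le.2 hkm
          have hk0 : (0 : ℝ) ≤ k := Nat.cast_nonneg k
          have h1 : 0 < (k:ℝ) - t := by rw [ht]; linarith
          have h2 : 0 < t * k + 1 := by
            have : (0:ℝ) ≤ t * k := mul_nonneg ht0.le hk0
            linarith
          have h3 : (0:ℝ) < (k:ℝ)^2 + 1 := by positivity
          exact div_pos (mul_pos (mul_pos (by linarith) h1) h2) h3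
        · intro k hk hk'
          rw [Finset.mem_Icc] at hk
          rw [polyS, if_neg hx2, Finset.mem_Icc] at hk'
          have hkm : k ≤ m := by omega
          have hkm' : (k : ℝ) ≤ (m : ℝ) := Nat.cast_le.2 hkm
          have hk0 : (0 : ℝ) ≤ k := Nat.cast_nonneg k
          rw [hv' k, aux_inner_neg]
          have h1 : (k:ℝ) - t < 0 := by rw [ht]; linarith
          have h2 : 0 < t * k + 1 := by
            have : (0:ℝ) ≤ t * k := mul_nonneg ht0.le hk0
            linarith
          have h3 : (0:ℝ) < (k:ℝ)^2 + 1 := by positivity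
          exact div_neg_of_neg_of_pos
            (mul_neg_of_neg_of_pos (mul_neg_of_pos_of_neg (by linarith) h1) h2) h3
    have key : ∀ i : Fin (4 * n), i ≠ x → (inner ℝ w (r i) : ℝ) < inner ℝ w (r x) := by
      intro i hne
      have hile : (i : ℕ) ≤ 4 * n - 1 := by have := i.isLt; omega
      rw [hform i hile, hform x hxle, inner_sum, inner_sum]
      refine aux_sum_lt (polyS_subset n i) ?_ hpos hneg
      intro h
      exact hne (Fin.ext (polyS_injOn n hn hile hxle h))
    have hconv : Convex ℝ {y : EuclideanSpace ℝ (Fin 2) | (inner ℝ w y : ℝ) < inner ℝ w (r x)} :=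
      convex_halfSpace_lt
        ⟨fun a b => inner_add_right w a b, fun a y => real_inner_smul_right w y a⟩ _
    have hsub : (fun j : Fin (4 * n) => r j) '' s ⊆
        {y : EuclideanSpace ℝ (Fin 2) | (inner ℝ w y : ℝ) < inner ℝ w (r x)} := by
      rintro _ ⟨i, hi, rfl⟩
      exact key i (fun h => hxs (h ▸ hi))
    have := convexHull_min hsub hconv hx
    simp only [Set.mem_setOf_eq] at this
    exact lt_irrefl _ this
  · -- the perimeter
    have hconst : ∀ j ∈ Finset.range (4 * n), dist (r j) (r ((j + 1) % (4 * n))) = c := by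
      intro j hj
      rw [Finset.mem_range] at hj
      by_cases hlt : j + 1 < 4 * n
      · rw [Nat.mod_eq_of_lt hlt]
        have h := hdist (j + 1) (by omega) (by omega)
        simpa using h
      · have hj4 : j = 4 * n - 1 := by omega
        have hmod : (j + 1) % (4 * n) = 0 := by
          have : j + 1 = 4 * n := by omega
          rw [this, Nat.mod_self]
        rw [hmod, hj4]
        exact hlast
    rw [Finset.sum_congr rfl hconst, Finset.sum_const, Finset.card_range, nsmul_eq_mul]
    push_cast
    ring
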